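/- arXiv:1901.08869 — 3 statements merged into one kernel-verified Lean document; each statement's English description precedes it below -/
import Mathlib

section
/- Let A be a finite-dimensional associative algebra over a field K graded by an arbitrary group G. Suppose that either char K = 0 or char K > dim_K A. Then the Jacobson radical J(A) is a graded ideal of A, i.e., J(A) = ⊕_{g∈G} (J(A) ∩ A_g). -/
open LinearMap Module Module.End Set DirectSum Polynomial

/-- If `b` is nilpotent and commutes with `a`, then `(a+b)^k - a^k` is nilpotent. -/
lemma isNilpotent_add_pow_sub_pow {R : Type*} [Ring R] {a b : R}
    (hc : Commute a b) (hb : IsNilpotent b) (k : ℕ) :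
    IsNilpotent ((a + b) ^ k - a ^ k) := by
  induction k with
  | zero => simp
  | succ k ih =>
    have key : (a + b) ^ (k+1) - a ^ (k+1) =
        ((a + b) ^ k - a ^ k) * (a + b) + a ^ k * b := by
      rw [pow_succ, pow_succ]; noncomm_ring
    rw [key]
    have hab : Commute a (a + b) := (Commute.refl a).add_right hc
    have hbab : Commute b (a + b) := hc.symm.add_right (Commute.refl b)
    have h1 : Commute ((a + b) ^ k - a ^ k) (a + b) :=
      ((Commute.refl (a+b)).pow_left k).sub_left (hab.pow_left k)
    have hn1 : IsNilpotent (((a + b) ^ k - a ^ k) * (a + b)) :=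
      h1.isNilpotent_mul_right ih
    have hn2 : IsNilpotent (a ^ k * b) :=
      (hc.pow_left k).isNilpotent_mul_left hb
    apply Commute.isNilpotent_add _ hn1 hn2
    have c1 : Commute (a + b) (a ^ k * b) :=
      ((hab.pow_left k).symm.mul_right hbab.symm)
    have c2 : Commute ((a + b) ^ k - a ^ k) (a ^ k * b) := by
      refine Commute.sub_left ?_ ?_
      · exact (c1.pow_left k)
      · exact ((Commute.refl a).pow_left k |>.pow_right k).mul_right ((hc.pow_left k))
    exact c2.mul_left c1

/-- The trace of the `k`-th power of an endomorphism restricted to the generalized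
`μ`-eigenspace is `μ ^ k` times the dimension of that eigenspace. -/
lemma trace_pow_restrict_genEigenspace {L V : Type*} [Field L] [AddCommGroup V] [Module L V]
    [FiniteDimensional L V] (f : Module.End L V) (μ : L) (k : ℕ)
    (h : MapsTo (f ^ k) ↑(f.maxGenEigenspace μ) ↑(f.maxGenEigenspace μ)) :
    trace L _ ((f ^ k).restrict h) =
      μ ^ k * (finrank L (f.maxGenEigenspace μ) : L) := by
  have hf : MapsTo f ↑(f.maxGenEigenspace μ) ↑(f.maxGenEigenspace μ) :=
    f.mapsTo_maxGenEigenspace_of_comm rfl μ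
  have hres : (f ^ k).restrict h = (f.restrict hf) ^ k := by
    rw [Module.End.pow_restrict k hf]
  set g := f.restrict hf with hg
  set C : Module.End L (f.maxGenEigenspace μ) := algebraMap L _ μ with hC
  have hN : IsNilpotent (g - C) := by
    have h2 := f.isNilpotent_restrict_maxGenEigenspace_sub_algebraMap μ
    have heq : (f - algebraMap L (Module.End L V) μ).restrict
        (f.mapsTo_maxGenEigenspace_of_comm (Algebra.mul_sub_algebraMap_commutes f μ) μ) = g - C := by
      ext x
      simp [LinearMap.restrict_apply, hg, hC, Algebra.algebraMap_eq_smul_one]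
      rfl
    rwa [heq] at h2
  have hcomm : Commute C (g - C) := (Algebra.commutes μ (g - C))
  have hnil : IsNilpotent (g ^ k - C ^ k) := by
    have h3 := isNilpotent_add_pow_sub_pow hcomm hN k
    rwa [add_sub_cancel] at h3
  have htr : trace L _ (g ^ k) - trace L _ (C ^ k) = 0 := by
    rw [← map_sub]
    exact (LinearMap.isNilpotent_trace_of_isNilpotent hnil).eq_zero
  rw [hres, sub_eq_zero.mp htr, ← map_pow, Algebra.algebraMap_eq_smul_one, map_smul,
    trace_one, smul_eq_mul]

/-- Over an algebraically closed field whose characteristic is `0` or bigger than the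
dimension, an endomorphism all of whose positive powers have zero trace is nilpotent. -/
lemma isNilpotent_of_forall_trace_pow_aux {L V : Type*} [Field L] [IsAlgClosed L]
    [AddCommGroup V] [Module L V] [FiniteDimensional L V]
    (hchar : CharZero L ∨ finrank L V < ringChar L)
    (f : Module.End L V) (h : ∀ k : ℕ, 0 < k → trace L V (f ^ k) = 0) :
    IsNilpotent f := by
  classical
  have hfin : {μ | f.maxGenEigenspace μ ≠ ⊥}.Finite :=
    WellFoundedGT.finite_ne_bot_of_iSupIndep f.independent_maxGenEigenspace
  have hds : DirectSum.IsInternal (fun μ : L => f.maxGenEigenspace μ) :=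
    DirectSum.isInternal_submodule_of_iSupIndep_of_iSup_eq_top
      f.independent_maxGenEigenspace f.iSup_maxGenEigenspace_eq_top
  have hmaps : ∀ k : ℕ, ∀ μ : L,
      MapsTo (f ^ k) ↑(f.maxGenEigenspace μ) ↑(f.maxGenEigenspace μ) :=
    fun k μ => f.mapsTo_maxGenEigenspace_of_comm ((Commute.refl f).pow_right k) μ
  have key : ∀ k : ℕ, 0 < k →
      ∑ μ ∈ hfin.toFinset, (finrank L (f.maxGenEigenspace μ) : L) * μ ^ k = 0 := by
    intro k hk
    have h1 := trace_eq_sum_trace_restrict' hds hfin (hmaps k)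
    rw [h k hk] at h1
    rw [← h1.symm]
    exact Finset.sum_congr rfl fun μ _ => by
      rw [trace_pow_restrict_genEigenspace f μ k (hmaps k μ), mul_comm]
  set T : Finset L := hfin.toFinset.erase 0 with hT
  have hTzero : ∀ μ ∈ T, (finrank L (f.maxGenEigenspace μ) : L) * μ = 0 := by
    set N := T.card with hN
    set e : (T : Finset L) ≃ Fin N := T.equivFin with he
    set ν : Fin N → L := fun i => (e.symm i : L) with hν
    have hνinj : Function.Injective ν :=
      fun i j hij => e.symm.injective (Subtype.ext hij)
    have hmem : ∀ j : Fin N, ν j ∈ T := fun j => (e.symm j).2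
    have hsys : ∀ i : Fin N,
        ∑ j : Fin N, ((finrank L (f.maxGenEigenspace (ν j)) : L) * ν j) * ν j ^ (i : ℕ) = 0 := by
      intro i
      have h2 : ∑ μ ∈ T, (finrank L (f.maxGenEigenspace μ) : L) * μ ^ ((i : ℕ) + 1) = 0 := by
        rw [hT, Finset.sum_erase _ (by simp)]
        exact key ((i : ℕ) + 1) (Nat.succ_pos _)
      rw [← h2, ← Finset.sum_coe_sort T
        (fun μ => (finrank L (f.maxGenEigenspace μ) : L) * μ ^ ((i : ℕ) + 1))]
      refine Fintype.sum_equiv e.symm _ _ fun j => ?_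
      rw [mul_assoc, ← pow_succ']
    have hzero := Matrix.eq_zero_of_forall_pow_sum_mul_pow_eq_zero hνinj hsys
    intro μ hμ
    have h4 := congrFun hzero (e ⟨μ, hμ⟩)
    have hnu : ν (e ⟨μ, hμ⟩) = μ := by simp [hν]
    rw [hnu] at h4
    simpa using h4
  have hbot : ∀ μ : L, μ ≠ 0 → f.maxGenEigenspace μ = ⊥ := by
    intro μ hμ0
    by_contra hne
    have hμT : μ ∈ T := by
      rw [hT, Finset.mem_erase]
      exact ⟨hμ0, hfin.mem_toFinset.mpr hne⟩
    have h5 := hTzero μ hμT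
    have h6 : (finrank L (f.maxGenEigenspace μ) : L) = 0 := by
      rcases mul_eq_zero.mp h5 with h | h
      · exact h
      · exact absurd h hμ0
    set d := finrank L (f.maxGenEigenspace μ) with hd
    have hdpos : 0 < d := Nat.pos_of_ne_zero fun h0 => hne (Submodule.finrank_eq_zero.mp h0)
    have hdle : d ≤ finrank L V := Submodule.finrank_le _
    rcases hchar with hc | hc
    · exact absurd (Nat.cast_eq_zero.mp h6) hdpos.ne'
    · have hp : CharP L (ringChar L) := ringChar.charP L
      have hdvd : ringChar L ∣ d := (CharP.cast_eq_zero_iff L (ringChar L) d).mp h6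
      have := Nat.le_of_dvd hdpos hdvd
      omega
  have htop : f.maxGenEigenspace 0 = ⊤ := by
    have h7 := f.iSup_maxGenEigenspace_eq_top
    rw [eq_top_iff, ← h7]
    refine iSup_le fun μ => ?_
    rcases eq_or_ne μ 0 with rfl | hμ
    · exact le_rfl
    · rw [hbot μ hμ]; exact bot_le
  have h8 : ∀ m : V, ∃ n : ℕ, (f ^ n) m = 0 := by
    intro m
    have hm : m ∈ f.maxGenEigenspace 0 := htop ▸ Submodule.mem_top
    rw [mem_maxGenEigenspace] at hm
    obtain ⟨n, hn⟩ := hm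
    exact ⟨n, by simpa using hn⟩
  exact ((charpoly_nilpotent_tfae f).out 2 0).mp h8

/-- Over a field of characteristic `0` or bigger than the dimension, an endomorphism all of
whose positive powers have zero trace is nilpotent. -/
lemma isNilpotent_of_forall_trace_pow {K V : Type*} [Field K]
    [AddCommGroup V] [Module K V] [FiniteDimensional K V]
    (hchar : CharZero K ∨ finrank K V < ringChar K)
    (f : Module.End K V) (h : ∀ k : ℕ, 0 < k → trace K V (f ^ k) = 0) :
    IsNilpotent f := by
  classical
  set n := finrank K V with hn
  set b : Basis (Fin n) K V := finBasis K V with hb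
  set L : Type _ := AlgebraicClosure K with hL
  set φ : K →+* L := algebraMap K L with hφ
  have hφinj : Function.Injective φ := φ.injective
  set ψK := LinearMap.toMatrixAlgEquiv b with hψK
  set bL : Basis (Fin n) L (Fin n → L) := Pi.basisFun L (Fin n) with hbL
  set ψ := LinearMap.toMatrixAlgEquiv bL with hψ
  set M : Matrix (Fin n) (Fin n) K := ψK f with hM
  set M' : Matrix (Fin n) (Fin n) L := M.map φ with hM'
  set g : Module.End L (Fin n → L) := ψ.symm M' with hg
  have htrmap : ∀ Q : Matrix (Fin n) (Fin n) K, (Q.map φ).trace = φ Q.trace := by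
    intro Q
    simp [Matrix.trace, Matrix.diag, map_sum]
  have hmappow : ∀ (Q : Matrix (Fin n) (Fin n) K) (k : ℕ), (Q.map φ) ^ k = (Q ^ k).map φ := by
    intro Q k
    have h0 : Q.map φ = φ.mapMatrix Q := rfl
    rw [h0, ← map_pow]
    rfl
  have hgk : ∀ k : ℕ, ψ (g ^ k) = (M ^ k).map φ := by
    intro k
    rw [map_pow, hg, AlgEquiv.apply_symm_apply, hM', hmappow]
  have hfink : finrank L (Fin n → L) = n := Module.finrank_fin_fun L
  have hchar' : CharZero L ∨ finrank L (Fin n → L) < ringChar L := by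
    rcases hchar with hc | hc
    · left; exact charZero_of_injective_algebraMap hφinj
    · right
      haveI h2 : CharP L (ringChar K) := charP_of_injective_algebraMap hφinj (ringChar K)
      have h3 : ringChar L = ringChar K := ringChar.eq L (ringChar K)
      rw [hfink, h3]
      exact hc
  have htr : ∀ k : ℕ, 0 < k → trace L (Fin n → L) (g ^ k) = 0 := by
    intro k hk
    have hψtr : trace L (Fin n → L) (g ^ k) = (ψ (g ^ k)).trace := by
      rw [trace_eq_matrix_trace L bL]
      rfl
    rw [hψtr, hgk, htrmap]
    have h4 : (M ^ k).trace = trace K V (f ^ k) := by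
      rw [trace_eq_matrix_trace K b, ← map_pow]
      rfl
    rw [h4, h k hk, map_zero]
  obtain ⟨m, hm⟩ := isNilpotent_of_forall_trace_pow_aux hchar' g htr
  refine ⟨m, ?_⟩
  have h4 : ((M ^ m).map φ : Matrix (Fin n) (Fin n) L) = 0 := by
    rw [← hgk, hm, map_zero]
  have h5 : M ^ m = 0 := by
    ext i j
    have h7 := congrFun (congrFun h4 i) j
    simp only [Matrix.map_apply, Matrix.zero_apply] at h7
    exact hφinj (by simp only [Matrix.zero_apply, map_zero]; exact h7)
  have h6 : ψK (f ^ m) = 0 := by rw [map_pow, ← hM, h5]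
  exact ψK.injective (by rw [h6, map_zero])

/-- Every element of the Jacobson radical of a finite-dimensional algebra is nilpotent. -/
lemma isNilpotent_of_mem_jacobson {K A : Type*} [Field K] [Ring A] [Algebra K A]
    [FiniteDimensional K A] {x : A} (hx : x ∈ (⊥ : Ideal A).jacobson) :
    IsNilpotent x := by
  haveI : IsArtinian A A := isArtinian_of_tower K inferInstance
  set f : ℕ →o (Submodule A A)ᵒᵈ :=
    ⟨fun n => Ideal.span {x ^ (n + 1)}, by
      intro n m hnm
      show Ideal.span {x ^ (m + 1)} ≤ Ideal.span {x ^ (n + 1)}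
      rw [Ideal.span_le, Set.singleton_subset_iff]
      refine Ideal.mem_span_singleton'.mpr ⟨x ^ (m - n), ?_⟩
      rw [← pow_add]
      congr 1
      omega⟩ with hf
  obtain ⟨n, hn⟩ := IsArtinian.monotone_stabilizes f
  have heq : (Ideal.span {x ^ (n + 1)} : Ideal A) = Ideal.span {x ^ (n + 2)} :=
    hn (n + 1) (Nat.le_succ n)
  have hmem : x ^ (n + 1) ∈ Ideal.span ({x ^ (n + 2)} : Set A) := by
    rw [← heq]
    exact Ideal.subset_span rfl
  obtain ⟨a, ha⟩ := Ideal.mem_span_singleton'.mp hmem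
  obtain ⟨z, hz⟩ := Ideal.mem_jacobson_iff.mp hx (-a)
  rw [Ideal.mem_bot] at hz
  have hzinv : z * (1 - a * x) = 1 := by
    have : z * (1 - a * x) = z * -a * x + z := by noncomm_ring
    rw [this, ← sub_eq_zero]
    exact hz
  have hzero : (1 - a * x) * x ^ (n + 1) = 0 := by
    have h1 : a * x ^ (n + 2) = (a * x) * x ^ (n + 1) := by
      rw [mul_assoc, ← pow_succ']
    rw [sub_mul, one_mul, ← h1, ha, sub_self]
  refine ⟨n + 1, ?_⟩
  calc x ^ (n + 1) = (z * (1 - a * x)) * x ^ (n + 1) := by rw [hzinv, one_mul]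
    _ = z * ((1 - a * x) * x ^ (n + 1)) := by rw [mul_assoc]
    _ = 0 := by rw [hzero, mul_zero]

section Grading

variable {G : Type*} [Group G] [DecidableEq G] {K : Type*} [Field K]
    {A : Type*} [Ring A] [Algebra K A] [FiniteDimensional K A]
    (ℬ : G → Submodule K A) (hinternal : DirectSum.IsInternal ℬ)
    (hmul : ∀ (g h : G), ∀ a ∈ ℬ g, ∀ b ∈ ℬ h, a * b ∈ ℬ (g * h))

set_option linter.unusedSectionVars false

/-- The projection onto the `g`-th graded component. -/
noncomputable def gradeProj (g : G) : A →ₗ[K] A :=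
  (ℬ g).subtype ∘ₗ (DirectSum.component K G (fun g => ℬ g) g) ∘ₗ
    (LinearEquiv.ofBijective (DirectSum.coeLinearMap ℬ) hinternal).symm.toLinearMap

lemma gradeProj_mem (g : G) (x : A) : gradeProj ℬ hinternal g x ∈ ℬ g :=
  ((LinearEquiv.ofBijective (DirectSum.coeLinearMap ℬ) hinternal).symm x g).2

lemma gradeProj_apply_of_mem {g h : G} {y : A} (hy : y ∈ ℬ h) :
    gradeProj ℬ hinternal g y = if g = h then y else 0 := by
  have hdef : gradeProj ℬ hinternal g y =
      ((LinearEquiv.ofBijective (DirectSum.coeLinearMap ℬ) hinternal).symm y g : A) := rfl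
  by_cases hgh : g = h
  · subst hgh
    rw [hdef, hinternal.ofBijective_coeLinearMap_of_mem hy, if_pos rfl]
  · rw [hdef, hinternal.ofBijective_coeLinearMap_of_mem_ne (Ne.symm hgh) hy, if_neg hgh]
    rfl

lemma gradeProj_sum {S : Finset G} (hS : ∀ g, g ∉ S → ℬ g = ⊥) (x : A) :
    ∑ g ∈ S, gradeProj ℬ hinternal g x = x := by
  classical
  set E := LinearEquiv.ofBijective (DirectSum.coeLinearMap ℬ) hinternal with hE
  have hx : DirectSum.coeLinearMap ℬ (E.symm x) = x := E.apply_symm_apply x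
  rw [DirectSum.coeLinearMap_eq_dfinsuppSum] at hx
  have hsub : (E.symm x).support ⊆ S := by
    intro g hg
    by_contra hgS
    have h2 := ((E.symm x) g).2
    have h3 : ((E.symm x) g : A) = 0 := (Submodule.eq_bot_iff _).mp (hS g hgS) _ h2
    exact (DFinsupp.mem_support_iff.mp hg) (Subtype.ext h3)
  have : ∑ g ∈ S, gradeProj ℬ hinternal g x = ∑ g ∈ (E.symm x).support, ((E.symm x) g : A) := by
    rw [Finset.sum_subset hsub]
    · rfl
    · intro g _ hg
      have : (E.symm x) g = 0 := DFinsupp.notMem_support_iff.mp hg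
      show ((E.symm x) g : A) = 0
      rw [this]; rfl
  rw [this]
  conv_rhs => rw [← hx]
  rfl

include hinternal hmul in
/-- The trace of left multiplication by a homogeneous element of degree `≠ 1` vanishes. -/
lemma trace_mulLeft_eq_zero {k : G} (hk : k ≠ 1) {c : A} (hc : c ∈ ℬ k) :
    trace K A (LinearMap.mulLeft K c) = 0 := by
  refine LinearMap.trace_eq_zero_of_mapsTo_ne hinternal (fun g => k * g) (fun g => ?_) ?_
  · intro hkg
    exact hk (mul_eq_right.mp hkg)
  · intro g x hx
    exact hmul k g c hc x hx

lemma isT_of_mem_jacobson {x : A} (hx : x ∈ (⊥ : Ideal A).jacobson) (b : A) :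
    trace K A (LinearMap.mulLeft K (b * x)) = 0 := by
  have hbx : b * x ∈ (⊥ : Ideal A).jacobson := Ideal.mul_mem_left _ b hx
  obtain ⟨m, hm⟩ := isNilpotent_of_mem_jacobson (K := K) hbx
  have hnil : IsNilpotent (LinearMap.mulLeft K (b * x)) :=
    ⟨m, by rw [LinearMap.pow_mulLeft, hm, LinearMap.mulLeft_zero_eq_zero]⟩
  exact (LinearMap.isNilpotent_trace_of_isNilpotent hnil).eq_zero

lemma mem_jacobson_of_isT (hchar : CharZero K ∨ finrank K A < ringChar K)
    {x : A} (hx : ∀ b : A, trace K A (LinearMap.mulLeft K (b * x)) = 0) :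
    x ∈ (⊥ : Ideal A).jacobson := by
  rw [Ideal.mem_jacobson_iff]
  intro y
  have haux : ∀ j : ℕ, (y * x) ^ (j + 1) = (y * (x * y) ^ j) * x := by
    intro j
    induction j with
    | zero => simp
    | succ j ih =>
      rw [pow_succ, ih, pow_succ]
      noncomm_ring
  have hpow : ∀ k : ℕ, 0 < k → ∃ b : A, (y * x) ^ k = b * x := by
    intro k hk
    obtain ⟨j, rfl⟩ := Nat.exists_eq_add_of_lt hk
    exact ⟨y * (x * y) ^ j, by rw [zero_add, haux]⟩
  have hnil : IsNilpotent (LinearMap.mulLeft K (y * x)) := by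
    apply isNilpotent_of_forall_trace_pow hchar
    intro k hk
    obtain ⟨b, hb⟩ := hpow k hk
    rw [LinearMap.pow_mulLeft, hb]
    exact hx b
  have hyx : IsNilpotent (y * x) := by
    obtain ⟨m, hm⟩ := hnil
    refine ⟨m, ?_⟩
    have := congrArg (fun T : A →ₗ[K] A => T 1) hm
    simp only [LinearMap.pow_mulLeft] at this
    simpa using this
  obtain ⟨u, hu⟩ := hyx.isUnit_add_one
  refine ⟨(↑u⁻¹ : A), ?_⟩
  rw [Ideal.mem_bot]
  have : (↑u⁻¹ : A) * (y * x + 1) = 1 := by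
    rw [← hu]; exact_mod_cast u.inv_mul
  calc (↑u⁻¹ : A) * y * x + ↑u⁻¹ - 1 = (↑u⁻¹ : A) * (y * x + 1) - 1 := by noncomm_ring
    _ = 0 := by rw [this, sub_self]

include hinternal hmul in
/-- Homogeneous components inherit the trace condition. -/
lemma isT_gradeProj {x : A} (hx : ∀ b : A, trace K A (LinearMap.mulLeft K (b * x)) = 0)
    (g : G) (b : A) :
    trace K A (LinearMap.mulLeft K (b * gradeProj ℬ hinternal g x)) = 0 := by
  classical
  set τ : A →ₗ[K] K := (trace K A) ∘ₗ (LinearMap.mul K A) with hτ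
  have hτ_eq : ∀ c : A, τ c = trace K A (LinearMap.mulLeft K c) := fun c => rfl
  have hfin : {g : G | ℬ g ≠ ⊥}.Finite :=
    WellFoundedGT.finite_ne_bot_of_iSupIndep hinternal.submodule_iSupIndep
  set S : Finset G := hfin.toFinset ∪ {g} with hS
  have hSbot : ∀ h : G, h ∉ S → ℬ h = ⊥ := by
    intro h hh
    rw [hS, Finset.mem_union] at hh
    push_neg at hh
    have := hh.1
    rw [Set.Finite.mem_toFinset] at this
    simpa using this
  have hkey : ∀ h : G, ∀ b' ∈ ℬ h, τ (b' * gradeProj ℬ hinternal g x) = 0 := by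
    intro h b' hb'
    by_cases hcase : h * g = 1
    · have h0 : τ (b' * x) = 0 := by rw [hτ_eq]; exact hx b'
      have hxsum : x = ∑ g' ∈ S, gradeProj ℬ hinternal g' x :=
        (gradeProj_sum ℬ hinternal hSbot x).symm
      have hexp : τ (b' * x) = ∑ g' ∈ S, τ (b' * gradeProj ℬ hinternal g' x) := by
        conv_lhs => rw [hxsum]
        rw [Finset.mul_sum, map_sum]
      have hvanish : ∀ g' ∈ S, g' ≠ g → τ (b' * gradeProj ℬ hinternal g' x) = 0 := by
        intro g' _ hg'
        have hmem' : b' * gradeProj ℬ hinternal g' x ∈ ℬ (h * g') :=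
          hmul h g' b' hb' _ (gradeProj_mem ℬ hinternal g' x)
        have hne : h * g' ≠ 1 := fun hcon => hg' (mul_left_cancel (hcon.trans hcase.symm))
        rw [hτ_eq]
        exact trace_mulLeft_eq_zero ℬ hinternal hmul hne hmem'
      have hgS : g ∈ S := by rw [hS]; exact Finset.mem_union_right _ (Finset.mem_singleton_self g)
      rw [hexp] at h0
      rwa [Finset.sum_eq_single_of_mem g hgS (fun g' hg' hne => hvanish g' hg' hne)] at h0
    · have hmem' : b' * gradeProj ℬ hinternal g x ∈ ℬ (h * g) :=
        hmul h g b' hb' _ (gradeProj_mem ℬ hinternal g x)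
      rw [hτ_eq]
      exact trace_mulLeft_eq_zero ℬ hinternal hmul hcase hmem'
  have hbsum : b = ∑ h ∈ S, gradeProj ℬ hinternal h b := (gradeProj_sum ℬ hinternal hSbot b).symm
  rw [← hτ_eq]
  conv_lhs => rw [hbsum]
  rw [Finset.sum_mul, map_sum]
  apply Finset.sum_eq_zero
  intro h _
  exact hkey h _ (gradeProj_mem ℬ hinternal h b)

end Grading

/-- Gordienko: over a field `K` with `char K = 0` or `char K > dim_K A`, the
Jacobson radical of a finite-dimensional associative `G`-graded algebra `A` is a graded
ideal, i.e. `J(A) = ⊕_{g ∈ G} (J(A) ∩ A_g)`. -/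
theorem jacobson_radical_is_graded
    {G : Type*} [Group G] [DecidableEq G] {K : Type*} [Field K]
    {A : Type*} [Ring A] [Algebra K A] [FiniteDimensional K A]
    (ℬ : G → Submodule K A)
    (hinternal : DirectSum.IsInternal ℬ)
    (hmul : ∀ (g h : G), ∀ a ∈ ℬ g, ∀ b ∈ ℬ h, a * b ∈ ℬ (g * h))
    (hchar : CharZero K ∨ Module.finrank K A < ringChar K) :
    ((⊥ : Ideal A).jacobson).restrictScalars K =
      ⨆ g : G, (((⊥ : Ideal A).jacobson).restrictScalars K ⊓ ℬ g) := by
  classical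
  apply le_antisymm
  · intro x hx
    have hxJ : x ∈ (⊥ : Ideal A).jacobson := hx
    have hfin : {g : G | ℬ g ≠ ⊥}.Finite :=
      WellFoundedGT.finite_ne_bot_of_iSupIndep hinternal.submodule_iSupIndep
    set S : Finset G := hfin.toFinset with hS
    have hSbot : ∀ g : G, g ∉ S → ℬ g = ⊥ := by
      intro g hg
      rw [hS, Set.Finite.mem_toFinset] at hg
      simpa using hg
    have hxsum : x = ∑ g ∈ S, gradeProj ℬ hinternal g x :=
      (gradeProj_sum ℬ hinternal hSbot x).symm
    rw [show x = ∑ g ∈ S, gradeProj ℬ hinternal g x from hxsum]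
    apply Submodule.sum_mem
    intro g _
    apply Submodule.mem_iSup_of_mem g
    refine Submodule.mem_inf.mpr ⟨?_, gradeProj_mem ℬ hinternal g x⟩
    show gradeProj ℬ hinternal g x ∈ (⊥ : Ideal A).jacobson
    exact mem_jacobson_of_isT hchar
      (isT_gradeProj ℬ hinternal hmul (isT_of_mem_jacobson hxJ) g)
  · exact iSup_le fun g => inf_le_left
end

section
/- Let D and D' be finite-dimensional G-graded division algebras over a field K with dim_K D = d² and dim_K D' = (d')², and let V be a nonzero finite-dimensional G-graded (D,D')-bimodule (so D_g V_h ⊆ V_{gh} and V_g D'_h ⊆ V_{gh}) with dim_K V = d·d'. Then d = d', and for every nonzero homogeneous v ∈ V one has V = D·v = v·D'; in particular V is free of rank 1 as a left D-module and as a right D'-module. -/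
open MulOpposite DirectSum

section Aux
variable {K M G : Type*} [Field K] [AddCommGroup M] [Module K M] [DecidableEq G]

lemma aux_sum_eq_zero (𝒜 : G → Submodule K M) (hint : DirectSum.IsInternal 𝒜)
    (s : Finset G) (σ : G → G) (hσ : Function.Injective σ) (x : G → M)
    (hx : ∀ g, x g ∈ 𝒜 (σ g)) (hsum : ∑ g ∈ s, x g = 0) : ∀ g ∈ s, x g = 0 := by
  classical
  set F : ⨁ k, 𝒜 k := ∑ g ∈ s, DirectSum.lof K G (fun k => 𝒜 k) (σ g) ⟨x g, hx g⟩ with hF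
  have hFcoe : DirectSum.coeLinearMap 𝒜 F = 0 := by
    rw [hF, map_sum]
    simpa [DirectSum.lof_eq_of, DirectSum.coeLinearMap_of] using hsum
  have hF0 : F = 0 := hint.injective (by rw [map_zero]; exact hFcoe)
  intro g₀ hg₀
  have := congrArg (fun f : ⨁ k, 𝒜 k => f (σ g₀)) hF0
  simp only [hF] at this
  rw [DFinsupp.finset_sum_apply] at this
  have hval : (∑ g ∈ s, (DirectSum.lof K G (fun k => 𝒜 k) (σ g) ⟨x g, hx g⟩) (σ g₀))
      = (⟨x g₀, hx g₀⟩ : 𝒜 (σ g₀)) := by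
    rw [Finset.sum_eq_single g₀]
    · simp [DirectSum.lof_eq_of, DirectSum.of_eq_same]
    · intro g hg hne
      exact DirectSum.of_eq_of_ne _ _ _ (fun h => hne (hσ h.symm))
    · exact fun h => absurd hg₀ h
  rw [hval] at this
  simpa using congrArg Subtype.val this

/-- key injectivity lemma: if `R` is a graded division ring acting on `V` homogeneously
(with injective grade shift `σ`), then smul by a nonzero homogeneous `v` is injective. -/
lemma aux_smul_inj {R V : Type*} [Ring R] [Algebra K R] [AddCommGroup V] [Module K V]
    [Module R V] (𝒮 : G → Submodule K R) (hint : DirectSum.IsInternal 𝒮)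
    (hdiv : ∀ (g : G), ∀ x ∈ 𝒮 g, x ≠ 0 → IsUnit x)
    (𝒱 : G → Submodule K V) (hVint : DirectSum.IsInternal 𝒱)
    (σ : G → G) (hσ : Function.Injective σ)
    (v : V) (hv0 : v ≠ 0)
    (hact : ∀ (g : G), ∀ x ∈ 𝒮 g, x • v ∈ 𝒱 (σ g)) :
    Function.Injective (fun a : R => a • v) := by
  classical
  have core : ∀ a : R, a • v = 0 → a = 0 := by
    intro a ha
    set e := LinearEquiv.ofBijective (DirectSum.coeLinearMap 𝒮) hint with he
    set f := e.symm a with hf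
    have hae : a = DirectSum.coeLinearMap 𝒮 f := by
      rw [hf]
      exact (e.apply_symm_apply a).symm
    have hsum : a = ∑ g ∈ DFinsupp.support f, ((f g : R)) := by
      conv_lhs => rw [hae, ← DirectSum.sum_support_of (x := f)]
      rw [map_sum]
      simp [DirectSum.coeLinearMap_of]
    have h0 : ∑ g ∈ DFinsupp.support f, (f g : R) • v = 0 := by
      rw [← Finset.sum_smul, ← hsum, ha]
    have key := aux_sum_eq_zero 𝒱 hVint (DFinsupp.support f) σ hσ
      (fun g => (f g : R) • v) (fun g => hact g (f g) (f g).2) h0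
    have hf0 : f = 0 := by
      refine DFinsupp.ext fun g => ?_
      by_cases hg : g ∈ DFinsupp.support f
      · have hne : (f g : R) ≠ 0 := by
          simpa [Submodule.coe_eq_zero] using DFinsupp.mem_support_iff.mp hg
        obtain ⟨u, hu⟩ := hdiv g (f g) (f g).2 hne
        have hv : v = 0 := by
          have hk : ((f g : R)) • v = 0 := key g hg
          have : (↑u⁻¹ : R) • ((u : R) • v) = v := by
            rw [← mul_smul, u.inv_mul, one_smul]
          rw [hu, hk, smul_zero] at this
          exact this.symm
        exact absurd hv hv0
      · simpa using DFinsupp.notMem_support_iff.mp hg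
    have : a = 0 := by rw [hae, hf0, map_zero]
    exact this
  intro a b hab
  have : (a - b) • v = 0 := by
    rw [sub_smul, sub_eq_zero]
    exact hab
  exact sub_eq_zero.mp (core _ this)

end Aux

/-- let `D`, `D'` be finite-dimensional `G`-graded division algebras with
`dim D = d²`, `dim D' = d'²`, and let `V` be a nonzero graded `(D,D')`-bimodule with
`dim V = d·d'`.  Then `d = d'`, and for every nonzero homogeneous `v ∈ V` one has
`V = D•v = v•D'`; in particular `V` is free of rank `1` as a left `D`-module and as a right
`D'`-module. -/
theorem graded_bimodule_cyclic
    {G : Type*} [Group G] [DecidableEq G] {K : Type*} [Field K]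
    {D : Type*} [Ring D] [Algebra K D] [FiniteDimensional K D]
    {D' : Type*} [Ring D'] [Algebra K D'] [FiniteDimensional K D']
    {V : Type*} [AddCommGroup V] [Module K V] [FiniteDimensional K V]
    [Module D V] [Module D'ᵐᵒᵖ V] [SMulCommClass D D'ᵐᵒᵖ V]
    [IsScalarTower K D V] [IsScalarTower K D'ᵐᵒᵖ V]
    (d d' : ℕ)
    (𝒟 : G → Submodule K D) (𝒟' : G → Submodule K D') (𝒱 : G → Submodule K V)
    -- `D` is a graded division algebra with `dim_K D = d²`
    (hDint : DirectSum.IsInternal 𝒟)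
    (hDmul : ∀ (g h : G), ∀ a ∈ 𝒟 g, ∀ b ∈ 𝒟 h, a * b ∈ 𝒟 (g * h))
    (hDone : (1 : D) ∈ 𝒟 (1 : G))
    (hDdiv : ∀ (g : G), ∀ x ∈ 𝒟 g, x ≠ 0 → IsUnit x)
    (hDdim : Module.finrank K D = d ^ 2)
    -- `D'` is a graded division algebra with `dim_K D' = d'²`
    (hD'int : DirectSum.IsInternal 𝒟')
    (hD'mul : ∀ (g h : G), ∀ a ∈ 𝒟' g, ∀ b ∈ 𝒟' h, a * b ∈ 𝒟' (g * h))
    (hD'one : (1 : D') ∈ 𝒟' (1 : G))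
    (hD'div : ∀ (g : G), ∀ x ∈ 𝒟' g, x ≠ 0 → IsUnit x)
    (hD'dim : Module.finrank K D' = d' ^ 2)
    -- `V` is a nonzero graded `(D,D')`-bimodule with `dim_K V = d·d'`
    (hVint : DirectSum.IsInternal 𝒱)
    (hVl : ∀ (g h : G), ∀ x ∈ 𝒟 g, ∀ w ∈ 𝒱 h, x • w ∈ 𝒱 (g * h))
    (hVr : ∀ (g h : G), ∀ w ∈ 𝒱 g, ∀ y ∈ 𝒟' h, (op y) • w ∈ 𝒱 (g * h))
    (hVdim : Module.finrank K V = d * d')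
    (hVne : ∃ w : V, w ≠ 0) :
    d = d' ∧
    ∀ (g : G) (v : V), v ∈ 𝒱 g → v ≠ 0 →
      (∀ z : V, ∃ a : D, a • v = z) ∧
      (∀ z : V, ∃ b : D', (op b) • v = z) ∧
      Function.Bijective (fun a : D => a • v) ∧
      Function.Bijective (fun b : D' => (op b) • v) := by
  classical
  -- the opposite grading on D'ᵐᵒᵖ
  set 𝒟op : G → Submodule K D'ᵐᵒᵖ := fun g => (𝒟' g).map ((opLinearEquiv K : D' ≃ₗ[K] D'ᵐᵒᵖ) : D' →ₗ[K] D'ᵐᵒᵖ)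
    with h𝒟op
  have h𝒟opint : DirectSum.IsInternal 𝒟op := by
    have := hD'int
    rw [DirectSum.isInternal_submodule_iff_iSupIndep_and_iSup_eq_top] at this ⊢
    constructor
    · have h1 := this.1.map_orderIso (Submodule.orderIsoMapComap
        (opLinearEquiv K : D' ≃ₗ[K] D'ᵐᵒᵖ))
      exact h1
    · have h2 : (⨆ g, 𝒟op g) =
          Submodule.map ((opLinearEquiv K : D' ≃ₗ[K] D'ᵐᵒᵖ) : D' →ₗ[K] D'ᵐᵒᵖ) (⨆ g, 𝒟' g) := by
        rw [Submodule.map_iSup]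
      rw [h2, this.2, Submodule.map_top, LinearEquiv.range]
  have h𝒟opdiv : ∀ (g : G), ∀ x ∈ 𝒟op g, x ≠ 0 → IsUnit x := by
    rintro g x ⟨y, hy, rfl⟩ hx0
    exact (hD'div g y hy (by simpa using hx0)).op
  -- injectivity of the polarity maps at a nonzero homogeneous vector
  have injL : ∀ (h : G) (v : V), v ∈ 𝒱 h → v ≠ 0 →
      Function.Injective (fun a : D => a • v) := by
    intro h v hv hv0
    exact aux_smul_inj 𝒟 hDint hDdiv 𝒱 hVint (fun g => g * h)
      (fun a b hab => by simpa using mul_right_cancel hab) v hv0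
      (fun g x hx => hVl g h x hx v hv)
  have injR : ∀ (h : G) (v : V), v ∈ 𝒱 h → v ≠ 0 →
      Function.Injective (fun b : D'ᵐᵒᵖ => b • v) := by
    intro h v hv hv0
    exact aux_smul_inj 𝒟op h𝒟opint h𝒟opdiv 𝒱 hVint (fun g => h * g)
      (fun a b hab => by simpa using mul_left_cancel hab) v hv0
      (by rintro g x ⟨y, hy, rfl⟩; exact hVr h g v hv y hy)
  -- a nonzero homogeneous vector exists
  obtain ⟨w, hw⟩ := hVne
  have : Nontrivial V := ⟨w, 0, hw⟩
  obtain ⟨g₀, v₀, hv₀, hv₀0⟩ : ∃ (g : G) (v : V), v ∈ 𝒱 g ∧ v ≠ 0 := by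
    set e := LinearEquiv.ofBijective (DirectSum.coeLinearMap 𝒱) hVint with he
    set f := e.symm w with hf
    have hfne : f ≠ 0 := by
      intro h
      apply hw
      have := congrArg e h
      rw [e.apply_symm_apply, map_zero] at this
      exact this
    obtain ⟨g, hg⟩ := DFinsupp.ne_iff.mp hfne
    exact ⟨g, (f g : V), (f g).2, by simpa [Submodule.coe_eq_zero] using hg⟩
  -- linear maps D → V and D'ᵐᵒᵖ → V for dimension counting
  have finrank_le : ∀ (h : G) (v : V), v ∈ 𝒱 h → v ≠ 0 →
      Module.finrank K D ≤ Module.finrank K V := by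
    intro h v hv hv0
    exact LinearMap.finrank_le_finrank_of_injective
      (f := { toFun := fun a : D => a • v,
              map_add' := fun a b => add_smul a b v,
              map_smul' := fun k a => smul_assoc k a v })
      (injL h v hv hv0)
  have finrank_le' : ∀ (h : G) (v : V), v ∈ 𝒱 h → v ≠ 0 →
      Module.finrank K D' ≤ Module.finrank K V := by
    intro h v hv hv0
    have : Module.finrank K D'ᵐᵒᵖ ≤ Module.finrank K V :=
      LinearMap.finrank_le_finrank_of_injective
        (f := { toFun := fun b : D'ᵐᵒᵖ => b • v,
                map_add' := fun a b => add_smul a b v,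
                map_smul' := fun k a => smul_assoc k a v })
        (injR h v hv hv0)
    calc Module.finrank K D' = Module.finrank K D'ᵐᵒᵖ :=
          ((opLinearEquiv K : D' ≃ₗ[K] D'ᵐᵒᵖ).finrank_eq)
      _ ≤ _ := this
  have hd2 : d ^ 2 ≤ d * d' := by
    rw [← hDdim, ← hVdim]; exact finrank_le g₀ v₀ hv₀ hv₀0
  have hd'2 : d' ^ 2 ≤ d * d' := by
    rw [← hD'dim, ← hVdim]; exact finrank_le' g₀ v₀ hv₀ hv₀0
  have hVpos : 0 < d * d' := by
    rw [← hVdim]; exact Module.finrank_pos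
  have hdpos : 0 < d := Nat.pos_of_ne_zero (by rintro rfl; simp at hVpos)
  have hd'pos : 0 < d' := Nat.pos_of_ne_zero (by rintro rfl; simp at hVpos)
  have hdd' : d = d' := by
    have h1 : d ≤ d' := by
      have : d * d ≤ d * d' := by rwa [← pow_two]
      exact Nat.le_of_mul_le_mul_left this hdpos
    have h2 : d' ≤ d := by
      have : d' * d' ≤ d' * d := by rw [← pow_two]; rwa [Nat.mul_comm d d'] at hd'2
      exact Nat.le_of_mul_le_mul_left this hd'pos
    exact le_antisymm h1 h2
  refine ⟨hdd', fun g v hv hv0 => ?_⟩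
  have hrD : Module.finrank K D = Module.finrank K V := by
    rw [hDdim, hVdim, hdd', pow_two]
  have hrD' : Module.finrank K D'ᵐᵒᵖ = Module.finrank K V := by
    rw [← (opLinearEquiv K : D' ≃ₗ[K] D'ᵐᵒᵖ).finrank_eq, hD'dim, hVdim, hdd', pow_two]
  set φ : D →ₗ[K] V :=
    { toFun := fun a : D => a • v,
      map_add' := fun a b => add_smul a b v,
      map_smul' := fun k a => smul_assoc k a v } with hφ
  set ψ : D'ᵐᵒᵖ →ₗ[K] V :=
    { toFun := fun b : D'ᵐᵒᵖ => b • v,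
      map_add' := fun a b => add_smul a b v,
      map_smul' := fun k a => smul_assoc k a v } with hψ
  have hφinj : Function.Injective φ := injL g v hv hv0
  have hψinj : Function.Injective ψ := injR g v hv hv0
  have hφsurj : Function.Surjective φ :=
    (LinearMap.injective_iff_surjective_of_finrank_eq_finrank hrD).mp hφinj
  have hψsurj : Function.Surjective ψ :=
    (LinearMap.injective_iff_surjective_of_finrank_eq_finrank hrD').mp hψinj
  have bijL : Function.Bijective (fun a : D => a • v) := ⟨hφinj, hφsurj⟩
  have bijR : Function.Bijective (fun b : D' => (op b) • v) := by
    have : (fun b : D' => (op b) • v) = (fun b : D'ᵐᵒᵖ => b • v) ∘ (op : D' → D'ᵐᵒᵖ) := rfl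
    rw [this]
    exact Function.Bijective.comp ⟨hψinj, hψsurj⟩ (opEquiv : D' ≃ D'ᵐᵒᵖ).bijective
  exact ⟨fun z => bijL.2 z, fun z => bijR.2 z, bijL, bijR⟩
end

section
/- Let K be a field, U = UT(n_1,…,n_t), and R = ⊕_{j=1}^t M_{1j} the first block row of U. Suppose u ∈ R is an idempotent (u² = u) which is a left unit of R (ux = x for all x ∈ R). Then u = E_1 + n for some n ∈ ⊕_{j=2}^t M_{1j} with n² = 0, and the inner automorphism φ of U given by φ(x) = (1−n) x (1+n) satisfies φ(E_1) = u; in particular there exists a K-algebra automorphism of U mapping u to E_1. -/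
set_option synthInstance.maxHeartbeats 1000000
set_option maxHeartbeats 1000000

open Matrix
open scoped TensorProduct

/-- The index type for block matrices with `t` blocks of sizes `n 0, …, n (t-1)`. -/
abbrev BIdx (t : ℕ) (n : Fin t → ℕ) := (i : Fin t) × Fin (n i)

/-- The algebra `UT(n 0, …, n (t-1))` of upper block triangular matrices over `K`, realized
as a subalgebra of the full matrix algebra. -/
def utAlg (K : Type*) [Field K] {t : ℕ} (n : Fin t → ℕ) :
    Subalgebra K (Matrix (BIdx t n) (BIdx t n) K) where
  carrier := {M | M.BlockTriangular fun p => p.1}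
  mul_mem' := fun ha hb => ha.mul hb
  one_mem' := Matrix.blockTriangular_one
  add_mem' := fun ha hb => ha.add hb
  zero_mem' := Matrix.blockTriangular_zero
  algebraMap_mem' := fun r => by
    simpa [Matrix.algebraMap_eq_diagonal] using
      Matrix.blockTriangular_diagonal (algebraMap K (BIdx t n → K) r)

/-- The matrix unit `e_{ij}` as an element of `utAlg K n`, for `i.1 ≤ j.1`. -/
def utE {K : Type*} [Field K] {t : ℕ} {n : Fin t → ℕ} (i j : BIdx t n) (hij : i.1 ≤ j.1) :
    utAlg K n :=
  ⟨Matrix.single i j 1, by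
    intro a b hab
    show Matrix.single i j (1 : K) a b = 0
    rw [Matrix.single]
    simp only [Matrix.of_apply, ite_eq_right_iff, and_imp]
    rintro rfl rfl
    exact absurd hij (not_le.mpr hab)⟩

/-- The homogeneous component of degree `x` of the tensor product grading on `utAlg K m ⊗ D`
determined by the sequence `η` (defining an elementary grading) and a grading `𝒟` on `D`:
it is spanned by the elements `e_{ij} ⊗ d` with `d` homogeneous of some degree `h` and
`η i * h * (η j)⁻¹ = x`. -/
def utTensorComp {G : Type*} [Group G] {K : Type*} [Field K] {t : ℕ} (m : Fin t → ℕ)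
    {D : Type*} [Ring D] [Algebra K D] (η : BIdx t m → G) (𝒟 : G → Submodule K D) (x : G) :
    Submodule K ((utAlg K m) ⊗[K] D) :=
  Submodule.span K {w | ∃ (i j : BIdx t m) (hij : i.1 ≤ j.1) (h : G) (d : D),
    d ∈ 𝒟 h ∧ η i * h * (η j)⁻¹ = x ∧ w = (utE i j hij) ⊗ₜ[K] d}

/-- The `(i,j)` block subspace `M_{ij}` of `utAlg K n`: the matrices supported on the
`n i × n j` block in position `(i,j)`. -/
def blockM (K : Type*) [Field K] {t : ℕ} (n : Fin t → ℕ) (i j : Fin t) :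
    Submodule K (utAlg K n) where
  carrier := {x | ∀ a b : BIdx t n, (a.1 ≠ i ∨ b.1 ≠ j) →
    (x : Matrix (BIdx t n) (BIdx t n) K) a b = 0}
  add_mem' := by
    intro x y hx hy a b h
    have hx' := hx a b h
    have hy' := hy a b h
    simp [Matrix.add_apply, hx', hy']
  zero_mem' := by intro a b h; simp
  smul_mem' := by
    intro c x hx a b h
    have hx' := hx a b h
    simp [Matrix.smul_apply, hx']

/-- The identity matrix `E_i` of the `i`-th diagonal block, as an element of `utAlg K n`. -/
def blockOne (K : Type*) [Field K] {t : ℕ} (n : Fin t → ℕ) (i : Fin t) : utAlg K n :=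
  ⟨Matrix.diagonal (fun p : BIdx t n => if p.1 = i then 1 else 0),
    Matrix.blockTriangular_diagonal _⟩

set_option maxHeartbeats 8000000 in
/-- if `u` is an idempotent left unit of the first block row
`R = ⊕_j M_{1j}` of `U = UT(n_1,…,n_t)`, then `u = E_1 + n` with `n` strictly upper in the
first block row and `n² = 0`, and the inner automorphism `x ↦ (1−n)·x·(1+n)` of `U` maps
`E_1` to `u`; in particular some algebra automorphism of `U` maps `E_1` to `u`. -/
theorem idempotent_left_unit_conjugate_to_blockOne
    {K : Type*} [Field K] {t : ℕ} (n : Fin (t + 1) → ℕ)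
    (u : utAlg K n)
    (huR : u ∈ ⨆ j : Fin (t + 1), blockM K n 0 j)
    (hidem : u * u = u)
    (hlu : ∀ x ∈ ⨆ j : Fin (t + 1), blockM K n 0 j, u * x = x) :
    ∃ N : utAlg K n,
      N ∈ (⨆ j : Fin (t + 1), ⨆ _ : (0 : Fin (t + 1)) < j, blockM K n 0 j) ∧
      u = blockOne K n 0 + N ∧
      N * N = 0 ∧
      ∃ φ : utAlg K n ≃ₐ[K] utAlg K n,
        (∀ x : utAlg K n, φ x = (1 - N) * x * (1 + N)) ∧
        φ (blockOne K n 0) = u := by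
  classical
  -- row support of u
  have hrow : ∀ a b : BIdx (t+1) n, a.1 ≠ 0 → (u : Matrix _ _ K) a b = 0 := by
    let S : Submodule K (utAlg K n) :=
      { carrier := {x : utAlg K n | ∀ a b : BIdx (t+1) n, a.1 ≠ 0 →
          (x : Matrix (BIdx (t+1) n) (BIdx (t+1) n) K) a b = 0}
        add_mem' := by
          intro x y hx hy a b h
          simp [Matrix.add_apply, hx a b h, hy a b h]
        zero_mem' := by intro a b h; simp
        smul_mem' := by
          intro c x hx a b h
          simp [Matrix.smul_apply, hx a b h] }
    have hsub : (⨆ j : Fin (t + 1), blockM K n 0 j) ≤ S := by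
      refine iSup_le fun j x hx a b ha => hx a b (Or.inl ha)
    exact hsub huR
  have hE1mem : blockOne K n 0 ∈ ⨆ j : Fin (t+1), blockM K n 0 j := by
    refine le_iSup (fun j => blockM K n 0 j) 0 ?_
    intro a b hab
    show (Matrix.diagonal (fun p : BIdx (t+1) n => if p.1 = 0 then (1:K) else 0)) a b = 0
    rcases eq_or_ne a b with rfl | h
    · rw [Matrix.diagonal_apply_eq]
      rcases hab with h | h <;> simp [h]
    · rw [Matrix.diagonal_apply_ne _ h]
  have hu1 : u * blockOne K n 0 = blockOne K n 0 := hlu _ hE1mem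
  have hval : (u : Matrix _ _ K) *
      Matrix.diagonal (fun p : BIdx (t+1) n => if p.1 = 0 then (1:K) else 0)
      = Matrix.diagonal (fun p : BIdx (t+1) n => if p.1 = 0 then (1:K) else 0) :=
    congrArg Subtype.val hu1
  have hcol : ∀ a b : BIdx (t+1) n, b.1 = 0 →
      (u : Matrix _ _ K) a b = if a = b then (1:K) else 0 := by
    intro a b hb
    have h := congrFun (congrFun hval a) b
    rw [Matrix.mul_diagonal, hb, if_pos rfl, mul_one, Matrix.diagonal_apply] at h
    rw [h]
    rcases eq_or_ne a b with rfl | hne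
    · simp [hb]
    · simp [hne]
  obtain ⟨N, hNdef⟩ : ∃ N : utAlg K n, N = u - blockOne K n 0 := ⟨_, rfl⟩
  have hNval : (N : Matrix _ _ K) = (u : Matrix _ _ K) -
      Matrix.diagonal (fun p : BIdx (t+1) n => if p.1 = 0 then (1:K) else 0) := by
    rw [hNdef]; rfl
  have hNsupp : ∀ a b : BIdx (t+1) n, a.1 ≠ 0 ∨ b.1 = 0 → (N : Matrix _ _ K) a b = 0 := by
    intro a b hab
    rw [hNval, Matrix.sub_apply]
    rcases hab with ha | hb
    · rw [hrow a b ha, Matrix.diagonal_apply]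
      rcases eq_or_ne a b with rfl | hne
      · simp [ha]
      · simp [hne]
    · rw [hcol a b hb, Matrix.diagonal_apply]
      rcases eq_or_ne a b with rfl | hne
      · simp [hb]
      · simp [hne]
  have huEq : u = blockOne K n 0 + N := by rw [hNdef, add_sub_cancel]

  -- N ∈ strictly upper part of first row
  have hNmem : N ∈ ⨆ j : Fin (t+1), ⨆ _ : (0 : Fin (t+1)) < j, blockM K n 0 j := by
    let P : Fin (t+1) → utAlg K n := fun j =>
      ⟨Matrix.of fun a b : BIdx (t+1) n => if b.1 = j then (N : Matrix _ _ K) a b else 0, by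
        intro a b hab
        show (if b.1 = j then (N : Matrix _ _ K) a b else 0) = 0
        split
        · exact N.2 hab
        · rfl⟩
    have hsum : N = ∑ j : Fin (t+1), P j := by
      apply Subtype.ext
      rw [AddSubmonoidClass.coe_finset_sum]
      ext a b
      rw [Matrix.sum_apply]
      simp only [P, Matrix.of_apply]
      rw [Finset.sum_ite_eq]
      simp
    rw [hsum]
    refine Submodule.sum_mem _ fun j _ => ?_
    rcases eq_or_ne j 0 with rfl | hj
    · have : P 0 = 0 := by
        apply Subtype.ext
        ext a b
        show (if b.1 = 0 then (N : Matrix _ _ K) a b else 0) = 0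
        split
        · exact hNsupp a b (Or.inr (by assumption))
        · rfl
      rw [this]
      exact Submodule.zero_mem _
    · have hjpos : (0 : Fin (t+1)) < j := Fin.pos_iff_ne_zero.mpr hj
      refine le_iSup (fun j => ⨆ _ : (0 : Fin (t+1)) < j, blockM K n 0 j) j ?_
      refine le_iSup (fun _ : (0 : Fin (t+1)) < j => blockM K n 0 j) hjpos ?_
      intro a b hab
      show (if b.1 = j then (N : Matrix _ _ K) a b else 0) = 0
      rcases hab with ha | hb
      · split
        · exact hNsupp a b (Or.inl ha)
        · rfl
      · rw [if_neg hb]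
  have hNN : N * N = 0 := by
    apply Subtype.ext
    rw [MulMemClass.coe_mul, ZeroMemClass.coe_zero]
    ext a b
    rw [Matrix.mul_apply, Matrix.zero_apply]
    refine Finset.sum_eq_zero fun c _ => ?_
    rcases eq_or_ne c.1 0 with hc | hc
    · rw [hNsupp a c (Or.inr hc), zero_mul]
    · rw [hNsupp c b (Or.inl hc), mul_zero]
  have hE1N : blockOne K n 0 * N = N := by
    apply Subtype.ext
    rw [MulMemClass.coe_mul]
    show Matrix.diagonal (fun p : BIdx (t+1) n => if p.1 = 0 then (1:K) else 0) *
        (N : Matrix _ _ K) = (N : Matrix _ _ K)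
    ext a b
    rw [Matrix.diagonal_mul]
    rcases eq_or_ne a.1 0 with ha | ha
    · rw [ha, if_pos rfl, one_mul]
    · rw [if_neg ha, zero_mul, hNsupp a b (Or.inl ha)]
  have hNE1 : N * blockOne K n 0 = 0 := by
    apply Subtype.ext
    rw [MulMemClass.coe_mul, ZeroMemClass.coe_zero]
    show (N : Matrix _ _ K) *
        Matrix.diagonal (fun p : BIdx (t+1) n => if p.1 = 0 then (1:K) else 0) = 0
    ext a b
    rw [Matrix.mul_diagonal, Matrix.zero_apply]
    rcases eq_or_ne b.1 0 with hb | hb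
    · rw [hNsupp a b (Or.inr hb), zero_mul]
    · rw [if_neg hb, mul_zero]
  have hwv : (1 - N) * (1 + N) = 1 := by
    rw [sub_mul, one_mul, mul_add, mul_one, hNN, add_zero]
    abel
  have hvw : (1 + N) * (1 - N) = 1 := by
    rw [add_mul, one_mul, mul_sub, mul_one, hNN, sub_zero]
    abel
  refine ⟨N, hNmem, huEq, hNN, ?_⟩
  refine ⟨{ toFun := fun x => (1 - N) * x * (1 + N)
            invFun := fun x => (1 + N) * x * (1 - N)
            left_inv := fun x => by
              show (1 + N) * ((1 - N) * x * (1 + N)) * (1 - N) = x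
              have h : (1 + N) * ((1 - N) * x * (1 + N)) * (1 - N)
                  = ((1 + N) * (1 - N)) * x * ((1 + N) * (1 - N)) := by
                simp only [mul_assoc]
              rw [h, hvw, one_mul, mul_one]
            right_inv := fun x => by
              show (1 - N) * ((1 + N) * x * (1 - N)) * (1 + N) = x
              have h : (1 - N) * ((1 + N) * x * (1 - N)) * (1 + N)
                  = ((1 - N) * (1 + N)) * x * ((1 - N) * (1 + N)) := by
                simp only [mul_assoc]
              rw [h, hwv, one_mul, mul_one]
            map_mul' := fun x y => by
              show (1 - N) * (x * y) * (1 + N)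
                  = ((1 - N) * x * (1 + N)) * ((1 - N) * y * (1 + N))
              have h : ((1 - N) * x * (1 + N)) * ((1 - N) * y * (1 + N))
                  = (1 - N) * (x * (((1 + N) * (1 - N)) * y)) * (1 + N) := by
                simp only [mul_assoc]
              rw [h, hvw, one_mul]
            map_add' := fun x y => by
              show (1 - N) * (x + y) * (1 + N)
                  = (1 - N) * x * (1 + N) + (1 - N) * y * (1 + N)
              simp only [mul_add, add_mul, mul_one]
              abel
            commutes' := fun r => by
              show (1 - N) * (algebraMap K (utAlg K n) r) * (1 + N)
                  = algebraMap K (utAlg K n) r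
              rw [mul_assoc, Algebra.commutes r (1 + N), ← mul_assoc, hwv,
                one_mul] }, fun x => rfl, ?_⟩
  show (1 - N) * blockOne K n 0 * (1 + N) = u
  rw [sub_mul, one_mul, hNE1, sub_zero, mul_add, mul_one, hE1N]
  exact huEq.symm
end
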